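/- Theorem 4.2(b). Let c > 0 and let {(P_1^{(j)},…,P_m^{(j)})}_{j≥0} be a sequence of tuples of orthonormal matrices satisfying the sufficient-ascent condition of the context. If (P_{*1},…,P_{*m}) is an accumulation point of the sequence (the limit in Frobenius norm of a subsequence), then (P_{*1},…,P_{*m}) satisfies the KKT condition: for every 1 ≤ ℓ ≤ m, ℋ_ℓ(P_{*1},…,P_{*m}) = P_{*ℓ}·((P_{*ℓ})^H ℋ_ℓ(P_{*1},…,P_{*m})) and (P_{*ℓ})^H ℋ_ℓ(P_{*1},…,P_{*m}) is Hermitian positive semidefinite. -/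

import Mathlib

open Matrix Filter Topology
open scoped ComplexOrder Classical

/-- The entries of the multi-mode product `B ×₁ P₁ᴴ ×₂ ⋯ ×ₘ Pₘᴴ` of an `m`-mode tensor
`B` of size `n 0 × ⋯ × n (m-1)` with the conjugate transposes of the matrices `P ℓ`.
The column index set of `P ℓ` is `(s : Fin t) × Fin (κ ℓ s)`, encoding the partition of
`k ℓ = Σ s, κ ℓ s` into `t` blocks (block `s` has the indices with first component `s`). -/
noncomputable def multiProd {m t : ℕ} {n : Fin m → ℕ} {κ : Fin m → Fin t → ℕ}
    (B : (∀ ℓ, Fin (n ℓ)) → ℂ)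
    (P : ∀ ℓ, Matrix (Fin (n ℓ)) ((s : Fin t) × Fin (κ ℓ s)) ℂ) :
    (∀ ℓ, (s : Fin t) × Fin (κ ℓ s)) → ℂ :=
  fun i => ∑ j : ∀ ℓ, Fin (n ℓ), (∏ ℓ, star (P ℓ (j ℓ) (i ℓ))) * B j

/-- The block-diagonal objective
`f(P₁,…,Pₘ) = ‖BDiag(B ×₁ P₁ᴴ ×₂ ⋯ ×ₘ Pₘᴴ)‖_F²`: the sum of `|T(i)|²` over all
multi-indices `i` whose components all lie in the same diagonal block. -/
noncomputable def fObj {m t : ℕ} {n : Fin m → ℕ} {κ : Fin m → Fin t → ℕ}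
    (B : (∀ ℓ, Fin (n ℓ)) → ℂ)
    (P : ∀ ℓ, Matrix (Fin (n ℓ)) ((s : Fin t) × Fin (κ ℓ s)) ℂ) : ℝ :=
  ∑ i : ∀ ℓ, (s : Fin t) × Fin (κ ℓ s),
    if ∃ s : Fin t, ∀ ℓ, (i ℓ).1 = s then Complex.normSq (multiProd B P i) else 0

/-- The tensor `B_{ℓ,s} = B ×₁ P_{1s}ᴴ ⋯ ×_{ℓ-1} P_{ℓ-1,s}ᴴ ×_{ℓ+1} P_{ℓ+1,s}ᴴ ⋯ ×ₘ P_{ms}ᴴ`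
(mode products by the `s`-th column blocks over every mode except `ℓ`), evaluated at the index
whose `ℓ`-th component is `a` and whose other components are given by `ih`. -/
noncomputable def Bls {m t : ℕ} {n : Fin m → ℕ} {κ : Fin m → Fin t → ℕ}
    (B : (∀ ℓ, Fin (n ℓ)) → ℂ)
    (P : ∀ ℓ, Matrix (Fin (n ℓ)) ((s : Fin t) × Fin (κ ℓ s)) ℂ)
    (ℓ : Fin m) (s : Fin t) (a : Fin (n ℓ))
    (ih : ∀ r : {r : Fin m // r ≠ ℓ}, Fin (κ r.1 s)) : ℂ :=
  ∑ j : ∀ r, Fin (n r),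
    if j ℓ = a then (∏ r : {r : Fin m // r ≠ ℓ}, star (P r.1 (j r.1) ⟨s, ih r⟩)) * B j else 0

/-- The matrix `H_{ℓs}(P₁,…,Pₘ) ∈ ℂ^{n_ℓ×n_ℓ}` with `(a,b)`-entry
`Σ_î B_{ℓ,s}(î[ℓ↦a])·conj(B_{ℓ,s}(î[ℓ↦b]))`, summed over multi-indices `î` with the
`ℓ`-th coordinate ignored. -/
noncomputable def Hmat {m t : ℕ} {n : Fin m → ℕ} {κ : Fin m → Fin t → ℕ}
    (B : (∀ ℓ, Fin (n ℓ)) → ℂ)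
    (P : ∀ ℓ, Matrix (Fin (n ℓ)) ((s : Fin t) × Fin (κ ℓ s)) ℂ)
    (ℓ : Fin m) (s : Fin t) : Matrix (Fin (n ℓ)) (Fin (n ℓ)) ℂ :=
  Matrix.of fun a b =>
    ∑ ih : ∀ r : {r : Fin m // r ≠ ℓ}, Fin (κ r.1 s),
      Bls B P ℓ s a ih * star (Bls B P ℓ s b ih)

/-- The partial Euclidean gradient `ℋ_ℓ(P₁,…,Pₘ) ∈ ℂ^{n_ℓ×k_ℓ}` of `fObj` with respect to
`P ℓ` (for the real inner product `⟨X,Y⟩ = Re tr(Yᴴ X)`): its `s`-th column block is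
`2 · H_{ℓs}(P₁,…,Pₘ) · P_{ℓs}`. -/
noncomputable def scrH {m t : ℕ} {n : Fin m → ℕ} {κ : Fin m → Fin t → ℕ}
    (B : (∀ ℓ, Fin (n ℓ)) → ℂ)
    (P : ∀ ℓ, Matrix (Fin (n ℓ)) ((s : Fin t) × Fin (κ ℓ s)) ℂ)
    (ℓ : Fin m) : Matrix (Fin (n ℓ)) ((s : Fin t) × Fin (κ ℓ s)) ℂ :=
  Matrix.of fun a sc => 2 * ∑ b, Hmat B P ℓ sc.1 a b * P ℓ b sc

/-- The trace norm (nuclear norm) of a complex matrix: the sum of all its singular values,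
computed as the sum of the square roots of the eigenvalues of `Hᴴ * H`. -/
noncomputable def traceNorm {α β : Type*} [Fintype α] [Fintype β] [DecidableEq β]
    (H : Matrix α β ℂ) : ℝ :=
  ∑ i, Real.sqrt ((Matrix.posSemidef_conjTranspose_mul_self H).1.eigenvalues i)

/-- The Frobenius norm of a complex matrix. -/
noncomputable def frobNorm {α β : Type*} [Fintype α] [Fintype β] (X : Matrix α β ℂ) : ℝ :=
  Real.sqrt (∑ a, ∑ b, Complex.normSq (X a b))

section Core
variable {α ι : Type*} [Fintype α] [Fintype ι] [DecidableEq α] [DecidableEq ι]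

local notation "⟪" x ", " y "⟫" => @inner ℂ _ _ x y

noncomputable def mcol (X : Matrix α ι ℂ) (i : ι) : EuclideanSpace ℂ α :=
  (WithLp.equiv 2 (α → ℂ)).symm fun a => X a i

lemma inner_mcol (X Y : Matrix α ι ℂ) (i : ι) :
    ⟪mcol X i, mcol Y i⟫ = (Xᴴ * Y) i i := by
  simp [mcol, PiLp.inner_apply, RCLike.inner_apply, Matrix.mul_apply,
    Matrix.conjTranspose_apply]
  exact Finset.sum_congr rfl fun _ _ => mul_comm _ _

lemma norm_col_sq (X : Matrix α ι ℂ) (i : ι) :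
    ((‖mcol X i‖ : ℝ) : ℂ) ^ 2 = (Xᴴ * X) i i := by
  rw [← inner_mcol]; exact (inner_self_eq_norm_sq_to_K (mcol X i)).symm

lemma diag_nonneg_of_psd {A : Matrix ι ι ℂ} (hA : A.PosSemidef) (i : ι) :
    0 ≤ A i i := by
  exact hA.diag_nonneg

lemma trace_eq_sum_inner (G H : Matrix α ι ℂ) (W : Matrix ι ι ℂ) (hW : W * Wᴴ = 1) :
    Matrix.trace (Gᴴ * H) = ∑ i, ⟪mcol (G * W) i, mcol (H * W) i⟫ := by
  have h1 : (G * W)ᴴ * (H * W) = Wᴴ * (Gᴴ * H) * W := by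
    rw [conjTranspose_mul]
    simp only [Matrix.mul_assoc]
  have h2 : Matrix.trace (Gᴴ * H) = Matrix.trace ((G * W)ᴴ * (H * W)) := by
    rw [h1, Matrix.trace_mul_cycle, ← Matrix.mul_assoc, hW, Matrix.one_mul]
  rw [h2, Matrix.trace]
  exact Finset.sum_congr rfl fun i _ => ((inner_mcol _ _ i)).symm

end Core

section Core2
variable {α ι : Type*} [Fintype α] [Fintype ι] [DecidableEq α] [DecidableEq ι]

local notation "⟪" x ", " y "⟫" => @inner ℂ _ _ x y

lemma exists_svd_data (H : Matrix α ι ℂ) : ∃ (W : Matrix ι ι ℂ) (lam : ι → ℝ),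
    W * Wᴴ = 1 ∧ Wᴴ * W = 1 ∧ (∀ i, 0 ≤ lam i) ∧
    Wᴴ * (Hᴴ * H) * W = Matrix.diagonal (fun i => (lam i : ℂ)) ∧
    traceNorm H = ∑ i, Real.sqrt (lam i) := by
  have hM := Matrix.posSemidef_conjTranspose_mul_self H
  set W : Matrix ι ι ℂ := (Matrix.IsHermitian.eigenvectorUnitary hM.1 : Matrix ι ι ℂ) with hWdef
  have hmem := (Matrix.IsHermitian.eigenvectorUnitary hM.1).2
  rw [Unitary.mem_iff] at hmem
  have hW2 : Wᴴ * W = 1 := by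
    simpa [Matrix.star_eq_conjTranspose] using hmem.1
  have hW1 : W * Wᴴ = 1 := by
    simpa [Matrix.star_eq_conjTranspose] using hmem.2
  refine ⟨W, hM.1.eigenvalues, hW1, hW2, hM.eigenvalues_nonneg, ?_, rfl⟩
  have hspec : (Hᴴ * H) = W * Matrix.diagonal (RCLike.ofReal ∘ hM.1.eigenvalues) * Wᴴ := by
    simpa [Matrix.star_eq_conjTranspose] using hM.1.spectral_theorem
  conv_lhs => rw [hspec]
  have : Matrix.diagonal (RCLike.ofReal ∘ hM.1.eigenvalues)
      = Matrix.diagonal (fun i => ((hM.1.eigenvalues i : ℝ) : ℂ)) := rfl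
  rw [this]
  calc Wᴴ * (W * Matrix.diagonal (fun i => ((hM.1.eigenvalues i : ℝ) : ℂ)) * Wᴴ) * W
      = (Wᴴ * W) * Matrix.diagonal (fun i => ((hM.1.eigenvalues i : ℝ) : ℂ)) * (Wᴴ * W) := by
        simp only [Matrix.mul_assoc]
    _ = _ := by rw [hW2, Matrix.one_mul, Matrix.mul_one]

end Core2

section Core3
variable {α ι : Type*} [Fintype α] [Fintype ι] [DecidableEq α] [DecidableEq ι]

local notation "⟪" x ", " y "⟫" => @inner ℂ _ _ x y

lemma hy_aux (H : Matrix α ι ℂ) (W : Matrix ι ι ℂ) (lam : ι → ℝ)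
    (hdiag : Wᴴ * (Hᴴ * H) * W = Matrix.diagonal (fun i => (lam i : ℂ))) (i : ι) :
    ‖mcol (H * W) i‖ = Real.sqrt (lam i) := by
  have h1 : (H*W)ᴴ*(H*W) = Wᴴ*(Hᴴ*H)*W := by
    rw [conjTranspose_mul]; simp only [Matrix.mul_assoc]
  have h2 : ((‖mcol (H*W) i‖:ℝ):ℂ)^2 = ((lam i : ℝ) : ℂ) := by
    rw [norm_col_sq, h1, hdiag, Matrix.diagonal_apply_eq]
  have h3 : ‖mcol (H*W) i‖^2 = lam i := by exact_mod_cast h2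
  rw [← h3, Real.sqrt_sq (norm_nonneg _)]

lemma hx_aux (G : Matrix α ι ℂ) (W : Matrix ι ι ℂ) (hW2 : Wᴴ * W = 1)
    (hG : (1 - Gᴴ * G).PosSemidef) (i : ι) : ‖mcol (G * W) i‖ ≤ 1 := by
  have h1 : (G*W)ᴴ*(G*W) = Wᴴ*(Gᴴ*G)*W := by
    rw [conjTranspose_mul]; simp only [Matrix.mul_assoc]
  have hpsd := hG.conjTranspose_mul_mul_same W
  have h4 : Wᴴ*(1 - Gᴴ*G)*W = 1 - Wᴴ*(Gᴴ*G)*W := by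
    rw [Matrix.mul_sub, Matrix.sub_mul, Matrix.mul_one, hW2]
  have h5 := diag_nonneg_of_psd (h4 ▸ hpsd) i
  have h6 : ((‖mcol (G*W) i‖:ℝ):ℂ)^2 = (Wᴴ*(Gᴴ*G)*W) i i := by rw [norm_col_sq, h1]
  rw [Matrix.sub_apply, Matrix.one_apply_eq, ← h6] at h5
  have h7 : ‖mcol (G*W) i‖^2 ≤ 1 := by
    rw [show ((‖mcol (G*W) i‖:ℝ):ℂ)^2 = ((‖mcol (G*W) i‖^2 : ℝ):ℂ) by push_cast; ring] at h5
    have := (Complex.le_def.mp h5).1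
    simp only [Complex.zero_re, Complex.sub_re, Complex.one_re, Complex.ofReal_re] at this
    linarith
  nlinarith [norm_nonneg (mcol (G*W) i)]

lemma re_trace_le_traceNorm (G H : Matrix α ι ℂ) (hG : (1 - Gᴴ * G).PosSemidef) :
    (Matrix.trace (Gᴴ * H)).re ≤ traceNorm H := by
  obtain ⟨W, lam, hW1, hW2, hlam, hdiag, htn⟩ := exists_svd_data H
  rw [trace_eq_sum_inner G H W hW1, Complex.re_sum, htn]
  refine Finset.sum_le_sum fun i _ => ?_
  calc (⟪mcol (G*W) i, mcol (H*W) i⟫).re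
      ≤ ‖(⟪mcol (G*W) i, mcol (H*W) i⟫)‖ := (Complex.re_le_norm _).trans_eq
        rfl
    _ ≤ ‖mcol (G*W) i‖ * ‖mcol (H*W) i‖ := norm_inner_le_norm _ _
    _ ≤ 1 * Real.sqrt (lam i) := by
        rw [hy_aux H W lam hdiag i]
        exact mul_le_mul_of_nonneg_right (hx_aux G W hW2 hG i) (Real.sqrt_nonneg _)
    _ = _ := one_mul _

end Core3

section Core4
variable {α ι : Type*} [Fintype α] [Fintype ι] [DecidableEq α] [DecidableEq ι]

local notation "⟪" x ", " y "⟫" => @inner ℂ _ _ x y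

lemma complex_eq_of_re {z : ℂ} {r : ℝ} (h1 : z.re = r) (h2 : ‖z‖ ≤ r) : z = (r : ℂ) := by
  have hsq := Complex.sq_norm z
  rw [Complex.normSq_apply] at hsq
  have hre := Complex.abs_re_le_norm z
  have h3 : z.im = 0 := by
    have habs : ‖z‖ = r := le_antisymm h2 (by rw [← h1]; exact (le_abs_self _).trans hre)
    have him : z.im * z.im = 0 := by
      rw [habs, h1] at hsq; nlinarith
    exact mul_self_eq_zero.mp him
  exact Complex.ext (by simp [h1]) (by simp [h3])

lemma collapse (W : Matrix ι ι ℂ) (hW2 : Wᴴ * W = 1) (A B : Matrix ι ι ℂ) :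
    (W * A * Wᴴ) * (W * B * Wᴴ) = W * (A * B) * Wᴴ := by
  calc (W*A*Wᴴ)*(W*B*Wᴴ) = W*(A*((Wᴴ*W)*(B*Wᴴ))) := by simp only [Matrix.mul_assoc]
  _ = W*(A*(B*Wᴴ)) := by rw [hW2, Matrix.one_mul]
  _ = W*(A*B)*Wᴴ := by simp only [Matrix.mul_assoc]

lemma kkt_of_eq (P H : Matrix α ι ℂ) (hP : Pᴴ * P = 1)
    (h : traceNorm H ≤ (Matrix.trace (Pᴴ * H)).re) :
    H = P * (Pᴴ * H) ∧ (Pᴴ * H).PosSemidef := by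
  obtain ⟨W, lam, hW1, hW2, hlam, hdiag, htn⟩ := exists_svd_data H
  have hxnorm : ∀ i, ‖mcol (P*W) i‖ = 1 := by
    intro i
    have h1 : (P*W)ᴴ*(P*W) = Wᴴ*(Pᴴ*P)*W := by
      rw [conjTranspose_mul]; simp only [Matrix.mul_assoc]
    have h2 : ((‖mcol (P*W) i‖:ℝ):ℂ)^2 = 1 := by
      rw [norm_col_sq, h1, hP, Matrix.mul_one, hW2, Matrix.one_apply_eq]
    have h3 : ‖mcol (P*W) i‖^2 = 1 := by exact_mod_cast h2
    nlinarith [norm_nonneg (mcol (P*W) i)]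
  have hynorm : ∀ i, ‖mcol (H*W) i‖ = Real.sqrt (lam i) := hy_aux H W lam hdiag
  have hterm : ∀ i ∈ Finset.univ, (⟪mcol (P*W) i, mcol (H*W) i⟫).re
      ≤ ‖mcol (P*W) i‖ * ‖mcol (H*W) i‖ := fun i _ =>
    ((Complex.re_le_norm _).trans_eq rfl).trans (norm_inner_le_norm _ _)
  have htr : (Matrix.trace (Pᴴ*H)).re = ∑ i, (⟪mcol (P*W) i, mcol (H*W) i⟫).re := by
    rw [trace_eq_sum_inner P H W hW1, Complex.re_sum]
  have hub : ∑ i, ‖mcol (P*W) i‖ * ‖mcol (H*W) i‖ = traceNorm H := by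
    rw [htn]
    exact Finset.sum_congr rfl fun i _ => by rw [hxnorm i, hynorm i, one_mul]
  have hsumeq : ∑ i, (⟪mcol (P*W) i, mcol (H*W) i⟫).re
      = ∑ i, ‖mcol (P*W) i‖ * ‖mcol (H*W) i‖ := by
    refine le_antisymm (Finset.sum_le_sum hterm) ?_
    rw [hub, ← htr]; exact h
  have heach := (Finset.sum_eq_sum_iff_of_le hterm).mp hsumeq
  -- derive the column relation
  have hcols : ∀ i, mcol (H*W) i = ((Real.sqrt (lam i) : ℝ) : ℂ) • mcol (P*W) i := by
    intro i
    have hre := heach i (Finset.mem_univ i)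
    have habs : ‖⟪mcol (P*W) i, mcol (H*W) i⟫‖ ≤ ‖mcol (P*W) i‖ * ‖mcol (H*W) i‖ :=
      norm_inner_le_norm _ _
    have hz : ⟪mcol (P*W) i, mcol (H*W) i⟫
        = ((‖mcol (P*W) i‖ : ℝ) : ℂ) * ((‖mcol (H*W) i‖ : ℝ) : ℂ) := by
      have := complex_eq_of_re hre habs
      rw [this]; push_cast; ring
    have := inner_eq_norm_mul_iff.mp hz
    rw [hxnorm i] at this
    norm_num at this
    rw [← this, hynorm i]
    exact RCLike.real_smul_eq_coe_smul (K := ℂ) _ _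
  have Δdef : ∀ (_ : True), True := fun _ => trivial
  set Δ : Matrix ι ι ℂ := Matrix.diagonal (fun i => ((Real.sqrt (lam i) : ℝ) : ℂ)) with hΔ
  have hHW : H * W = P * W * Δ := by
    ext a i
    have := congrArg (fun v => v a) (hcols i)
    simp only [mcol, WithLp.equiv_symm_apply, PiLp.toLp_apply, PiLp.smul_apply, smul_eq_mul] at this
    rw [this, hΔ, Matrix.mul_diagonal]
    ring
  have hH : H = P * (W * Δ * Wᴴ) := by
    calc H = H * (W * Wᴴ) := by rw [hW1, Matrix.mul_one]
    _ = (H * W) * Wᴴ := by rw [Matrix.mul_assoc]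
    _ = (P * W * Δ) * Wᴴ := by rw [hHW]
    _ = P * (W * Δ * Wᴴ) := by simp only [Matrix.mul_assoc]
  have hS : Pᴴ * H = W * Δ * Wᴴ := by
    rw [hH, ← Matrix.mul_assoc, hP, Matrix.one_mul]
  have hpsd : (W * Δ * Wᴴ).PosSemidef := by
    refine Matrix.PosSemidef.mul_mul_conjTranspose_same ?_ W
    refine Matrix.posSemidef_diagonal_iff.mpr fun i => ?_
    rw [Complex.zero_le_real]
    exact Real.sqrt_nonneg _
  exact ⟨by rw [hS, ← hH], by rw [hS]; exact hpsd⟩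

lemma exists_dual (H : Matrix α ι ℂ) :
    ∃ G : Matrix α ι ℂ, (1 - Gᴴ * G).PosSemidef ∧ (Matrix.trace (Gᴴ * H)).re = traceNorm H := by
  obtain ⟨W, lam, hW1, hW2, hlam, hdiag, htn⟩ := exists_svd_data H
  set gr : ι → ℝ := fun i => if lam i = 0 then (0:ℝ) else (Real.sqrt (lam i))⁻¹ with hgr
  set g : ι → ℂ := fun i => ((gr i : ℝ) : ℂ) with hg
  set D : Matrix ι ι ℂ := Matrix.diagonal (fun i => ((lam i : ℝ) : ℂ)) with hD
  set K : Matrix ι ι ℂ := W * Matrix.diagonal g * Wᴴ with hK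
  have hM' : Hᴴ * H = W * D * Wᴴ := by
    calc Hᴴ*H = (W*Wᴴ)*(Hᴴ*H)*(W*Wᴴ) := by rw [hW1, Matrix.one_mul, Matrix.mul_one]
    _ = W*(Wᴴ*(Hᴴ*H)*W)*Wᴴ := by simp only [Matrix.mul_assoc]
    _ = W*D*Wᴴ := by rw [hdiag, hD]
  have hKH : Kᴴ = K := by
    rw [hK, conjTranspose_mul, conjTranspose_mul, conjTranspose_conjTranspose,
      Matrix.diagonal_conjTranspose]
    have : star g = g := by
      funext i; simp [hg, Complex.star_def, Complex.conj_ofReal]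
    rw [this, Matrix.mul_assoc]
  refine ⟨H * K, ?_, ?_⟩
  · have hGG : (H * K)ᴴ * (H * K) = W * Matrix.diagonal (fun i => g i * ((lam i : ℝ):ℂ) * g i) * Wᴴ := by
      calc (H*K)ᴴ*(H*K) = Kᴴ*(Hᴴ*H)*K := by
            rw [conjTranspose_mul]; simp only [Matrix.mul_assoc]
      _ = K*(W*D*Wᴴ)*K := by rw [hKH, hM']
      _ = ((W * Matrix.diagonal g * Wᴴ)*(W*D*Wᴴ))*K := by rw [hK, Matrix.mul_assoc, Matrix.mul_assoc]
      _ = (W * (Matrix.diagonal g * D) * Wᴴ)*(W * Matrix.diagonal g * Wᴴ) := by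
            rw [collapse W hW2, hK]
      _ = W * ((Matrix.diagonal g * D) * Matrix.diagonal g) * Wᴴ := collapse W hW2 _ _
      _ = _ := by
            rw [hD, Matrix.diagonal_mul_diagonal, Matrix.diagonal_mul_diagonal]
    have hone : (1 : Matrix ι ι ℂ) - (H*K)ᴴ*(H*K)
        = W * Matrix.diagonal (fun i => 1 - g i * ((lam i : ℝ):ℂ) * g i) * Wᴴ := by
      rw [hGG]
      have h1 : (Matrix.diagonal (fun _ : ι => (1:ℂ))) = (1 : Matrix ι ι ℂ) := Matrix.diagonal_one
      have : Matrix.diagonal (fun i => 1 - g i * ((lam i : ℝ):ℂ) * g i)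
          = 1 - Matrix.diagonal (fun i => g i * ((lam i : ℝ):ℂ) * g i) := by
        rw [← h1, Matrix.diagonal_sub]
      rw [this, Matrix.mul_sub, Matrix.sub_mul, Matrix.mul_one, hW1]
    rw [hone]
    refine Matrix.PosSemidef.mul_mul_conjTranspose_same ?_ W
    refine Matrix.posSemidef_diagonal_iff.mpr fun i => ?_
    have : g i * ((lam i : ℝ):ℂ) * g i = ((gr i * lam i * gr i : ℝ) : ℂ) := by
      rw [hg]; push_cast; ring
    rw [this, show (1:ℂ) - ((gr i * lam i * gr i : ℝ) : ℂ) = ((1 - gr i * lam i * gr i : ℝ) : ℂ) by push_cast; ring,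
      Complex.zero_le_real]
    by_cases hli : lam i = 0
    · simp [hgr, hli]
    · have hpos : 0 < lam i := lt_of_le_of_ne (hlam i) (Ne.symm hli)
      have hs : Real.sqrt (lam i) ≠ 0 := by positivity
      have : gr i * lam i * gr i = 1 := by
        rw [hgr]; simp only [hli, if_false]
        rw [show lam i = Real.sqrt (lam i) * Real.sqrt (lam i) from (Real.mul_self_sqrt (hlam i)).symm]
        field_simp
        rw [Real.sqrt_sq (Real.sqrt_nonneg _)]
      rw [this]; norm_num
  · have hGH : (H * K)ᴴ * H = W * (Matrix.diagonal g * D) * Wᴴ := by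
      calc (H*K)ᴴ*H = Kᴴ*(Hᴴ*H) := by rw [conjTranspose_mul]; rw [Matrix.mul_assoc]
      _ = K*(W*D*Wᴴ) := by rw [hKH, hM']
      _ = (W * Matrix.diagonal g * Wᴴ)*(W*D*Wᴴ) := by rw [hK]
      _ = _ := collapse W hW2 _ _
    rw [hGH]
    have htr1 : Matrix.trace (W * (Matrix.diagonal g * D) * Wᴴ)
        = Matrix.trace (Matrix.diagonal g * D) := by
      rw [Matrix.trace_mul_cycle, ← Matrix.mul_assoc, hW2, Matrix.one_mul]
    rw [htr1, hD, Matrix.diagonal_mul_diagonal, Matrix.trace_diagonal]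
    rw [htn, Complex.re_sum]
    refine Finset.sum_congr rfl fun i _ => ?_
    have : g i * ((lam i : ℝ):ℂ) = ((gr i * lam i : ℝ) : ℂ) := by rw [hg]; push_cast; ring
    rw [this, Complex.ofReal_re]
    by_cases hli : lam i = 0
    · simp [hgr, hli]
    · have hpos : 0 < lam i := lt_of_le_of_ne (hlam i) (Ne.symm hli)
      have hs : Real.sqrt (lam i) ≠ 0 := by positivity
      rw [hgr]; simp only [hli, if_false]
      rw [show lam i = Real.sqrt (lam i) * Real.sqrt (lam i) from (Real.mul_self_sqrt (hlam i)).symm]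
      field_simp
      rw [Real.sqrt_sq (Real.sqrt_nonneg _)]
end Core4


lemma entry_le_frobNorm {α β : Type*} [Fintype α] [Fintype β] (X : Matrix α β ℂ) (a : α) (b : β) :
    ‖X a b‖ ≤ frobNorm X := by
  rw [frobNorm, show ‖X a b‖ = Real.sqrt (Complex.normSq (X a b)) by
    rw [Complex.norm_def]]
  apply Real.sqrt_le_sqrt
  calc Complex.normSq (X a b) ≤ ∑ b', Complex.normSq (X a b') :=
        Finset.single_le_sum (fun _ _ => Complex.normSq_nonneg _) (Finset.mem_univ b)
  _ ≤ ∑ a', ∑ b', Complex.normSq (X a' b') :=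
        Finset.single_le_sum (fun _ _ => Finset.sum_nonneg fun _ _ => Complex.normSq_nonneg _)
          (Finset.mem_univ a)

lemma fObj_le {m t : ℕ} {n : Fin m → ℕ} {κ : Fin m → Fin t → ℕ}
    (B : (∀ ℓ, Fin (n ℓ)) → ℂ)
    (Q : ∀ ℓ, Matrix (Fin (n ℓ)) ((s : Fin t) × Fin (κ ℓ s)) ℂ)
    (hQ : ∀ ℓ, (Q ℓ)ᴴ * Q ℓ = 1) :
    fObj B Q ≤ (Fintype.card (∀ ℓ, (s : Fin t) × Fin (κ ℓ s)) : ℝ)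
      * (∑ j : (∀ ℓ, Fin (n ℓ)), ‖B j‖)^2 := by
  set S : ℝ := ∑ j : (∀ ℓ, Fin (n ℓ)), ‖B j‖ with hS
  have hS0 : 0 ≤ S := Finset.sum_nonneg fun _ _ => norm_nonneg _
  have hentry : ∀ ℓ a sc, ‖Q ℓ a sc‖ ≤ 1 := by
    intro ℓ a sc
    have h1 : ((Q ℓ)ᴴ * Q ℓ) sc sc = 1 := by rw [hQ ℓ]; exact Matrix.one_apply_eq _
    have h2 : ∑ a', (Complex.normSq (Q ℓ a' sc) : ℂ) = 1 := by
      rw [← h1, Matrix.mul_apply]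
      refine Finset.sum_congr rfl fun a' _ => ?_
      rw [Matrix.conjTranspose_apply, Complex.star_def, mul_comm, Complex.mul_conj]
    have h3 : ∑ a', Complex.normSq (Q ℓ a' sc) = 1 := by
      have := congrArg Complex.re h2
      simpa using this
    have h4 : Complex.normSq (Q ℓ a sc) ≤ 1 := by
      rw [← h3]
      exact Finset.single_le_sum (f := fun a' => Complex.normSq (Q ℓ a' sc))
        (fun _ _ => Complex.normSq_nonneg _) (Finset.mem_univ a)
    rw [Complex.norm_def]
    exact Real.sqrt_le_one.mpr h4
  have hmp : ∀ i, ‖multiProd B Q i‖ ≤ S := by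
    intro i
    calc ‖multiProd B Q i‖
        ≤ ∑ j : (∀ ℓ, Fin (n ℓ)), ‖(∏ ℓ, star (Q ℓ (j ℓ) (i ℓ))) * B j‖ :=
          norm_sum_le _ _
    _ ≤ S := by
        rw [hS]
        refine Finset.sum_le_sum fun j _ => ?_
        rw [norm_mul]
        have hp : ‖∏ ℓ, star (Q ℓ (j ℓ) (i ℓ))‖ ≤ 1 := by
          rw [norm_prod]
          refine Finset.prod_le_one (fun _ _ => norm_nonneg _) fun ℓ _ => ?_
          rw [Complex.star_def, Complex.norm_conj]
          exact hentry ℓ (j ℓ) (i ℓ)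
        calc ‖∏ ℓ, star (Q ℓ (j ℓ) (i ℓ))‖ * ‖B j‖
            ≤ 1 * ‖B j‖ :=
              mul_le_mul_of_nonneg_right hp (norm_nonneg _)
        _ = ‖B j‖ := one_mul _
  calc fObj B Q ≤ ∑ _i : ∀ ℓ, (s : Fin t) × Fin (κ ℓ s), S^2 := by
        refine Finset.sum_le_sum fun i _ => ?_
        split
        · rw [Complex.normSq_eq_norm_sq]
          exact pow_le_pow_left₀ (norm_nonneg _) (hmp i) 2
        · positivity
  _ = _ := by rw [Finset.sum_const, Finset.card_univ, nsmul_eq_mul]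

set_option maxHeartbeats 2000000 in
/-- Theorem 4.2(b): under the sufficient-ascent condition, any accumulation
point `(P_{*1},…,P_{*m})` of the iterates satisfies the KKT condition: each
`ℋ_ℓ(P_*) = P_{*ℓ}·(P_{*ℓ}ᴴ ℋ_ℓ(P_*))` with `P_{*ℓ}ᴴ ℋ_ℓ(P_*)` Hermitian positive
semidefinite. -/
theorem stmt_18 (m t : ℕ) (hm : 1 ≤ m) (ht : 1 ≤ t)
    (n : Fin m → ℕ) (hn : ∀ ℓ, 1 ≤ n ℓ)
    (κ : Fin m → Fin t → ℕ) (hκ : ∀ ℓ s, 1 ≤ κ ℓ s)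
    (hkn : ∀ ℓ, (∑ s, κ ℓ s) ≤ n ℓ)
    (B : (∀ ℓ, Fin (n ℓ)) → ℂ)
    (P : ℕ → ∀ ℓ, Matrix (Fin (n ℓ)) ((s : Fin t) × Fin (κ ℓ s)) ℂ)
    (horth : ∀ j ℓ, (P j ℓ)ᴴ * P j ℓ = 1)
    (c : ℝ) (hc : 0 < c)
    (hsa : ∀ j : ℕ,
      c * (Finset.univ.sup' ⟨⟨0, hm⟩, Finset.mem_univ _⟩ fun ℓ : Fin m =>
          traceNorm (scrH B (P j) ℓ) - (Matrix.trace ((P j ℓ)ᴴ * scrH B (P j) ℓ)).re)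
        ≤ fObj B (P (j + 1)) - fObj B (P j))
    (Pstar : ∀ ℓ, Matrix (Fin (n ℓ)) ((s : Fin t) × Fin (κ ℓ s)) ℂ)
    (hacc : ∃ I : Set ℕ, I.Infinite ∧ ∀ ℓ,
      Tendsto (fun j => frobNorm (P j ℓ - Pstar ℓ)) (atTop ⊓ 𝓟 I) (𝓝 0)) :
    ∀ ℓ : Fin m,
      scrH B Pstar ℓ = Pstar ℓ * ((Pstar ℓ)ᴴ * scrH B Pstar ℓ) ∧
      ((Pstar ℓ)ᴴ * scrH B Pstar ℓ).PosSemidef := by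
  classical
  obtain ⟨I, hI, hfr⟩ := hacc
  set F : Filter ℕ := atTop ⊓ 𝓟 I with hF
  have hFne : F.NeBot := by
    refine Filter.inf_principal_neBot_iff.mpr fun U hU => ?_
    obtain ⟨a, ha⟩ := Filter.mem_atTop_sets.mp hU
    obtain ⟨b, hbI, hab⟩ := hI.exists_gt a
    exact ⟨b, ha b hab.le, hbI⟩
  haveI := hFne
  have hent : ∀ ℓ a sc, Tendsto (fun j => P j ℓ a sc) F (𝓝 (Pstar ℓ a sc)) := by
    intro ℓ a sc
    rw [tendsto_iff_norm_sub_tendsto_zero]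
    refine squeeze_zero (fun j => norm_nonneg _) (fun j => ?_) (hfr ℓ)
    simpa [Matrix.sub_apply] using entry_le_frobNorm (P j ℓ - Pstar ℓ) a sc
  have hBls : ∀ ℓ s a ih, Tendsto (fun j => Bls B (P j) ℓ s a ih) F
      (𝓝 (Bls B Pstar ℓ s a ih)) := by
    intro ℓ s a ih
    simp only [Bls]
    refine tendsto_finset_sum _ fun jj _ => ?_
    by_cases hcnd : jj ℓ = a
    · simp only [if_pos hcnd]
      exact Tendsto.mul_const _ (tendsto_finset_prod _ fun r _ =>
        (hent r.1 (jj r.1) ⟨s, ih r⟩).star)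
    · simp only [if_neg hcnd]; exact tendsto_const_nhds
  have hHmat : ∀ ℓ s a b, Tendsto (fun j => Hmat B (P j) ℓ s a b) F
      (𝓝 (Hmat B Pstar ℓ s a b)) := by
    intro ℓ s a b
    simp only [Hmat, Matrix.of_apply]
    exact tendsto_finset_sum _ fun ih _ => (hBls ℓ s a ih).mul (hBls ℓ s b ih).star
  have hscrH : ∀ ℓ a sc, Tendsto (fun j => scrH B (P j) ℓ a sc) F
      (𝓝 (scrH B Pstar ℓ a sc)) := by
    intro ℓ a sc
    simp only [scrH, Matrix.of_apply]
    exact ((tendsto_finset_sum _ fun b _ =>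
      (hHmat ℓ sc.1 a b).mul (hent ℓ b sc))).const_mul 2
  have htrexp : ∀ (ℓ : Fin m) (X Y : Matrix (Fin (n ℓ)) ((s : Fin t) × Fin (κ ℓ s)) ℂ),
      (Matrix.trace (Xᴴ * Y)).re = ∑ sc, ∑ a, (star (X a sc) * Y a sc).re := by
    intro ℓ X Y
    simp [Matrix.trace, Matrix.diag, Matrix.mul_apply, Matrix.conjTranspose_apply]
  have htrP : ∀ ℓ, Tendsto (fun j => (Matrix.trace ((P j ℓ)ᴴ * scrH B (P j) ℓ)).re) F
      (𝓝 ((Matrix.trace ((Pstar ℓ)ᴴ * scrH B Pstar ℓ)).re)) := by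
    intro ℓ
    simp only [htrexp ℓ]
    refine tendsto_finset_sum _ fun sc _ => tendsto_finset_sum _ fun a _ => ?_
    exact (Complex.continuous_re.tendsto _).comp ((hent ℓ a sc).star.mul (hscrH ℓ a sc))
  have horthStar : ∀ ℓ, (Pstar ℓ)ᴴ * Pstar ℓ = 1 := by
    intro ℓ
    ext sc sc'
    have h2 : Tendsto (fun j => ((P j ℓ)ᴴ * P j ℓ) sc sc') F
        (𝓝 (((Pstar ℓ)ᴴ * Pstar ℓ) sc sc')) := by
      simp only [Matrix.mul_apply, Matrix.conjTranspose_apply]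
      exact tendsto_finset_sum _ fun a _ => (hent ℓ a sc).star.mul (hent ℓ a sc')
    have h3 : (fun j => ((P j ℓ)ᴴ * P j ℓ) sc sc')
        = fun _ => (1 : Matrix ((s : Fin t) × Fin (κ ℓ s)) ((s : Fin t) × Fin (κ ℓ s)) ℂ) sc sc' := by
      funext j; rw [horth j ℓ]
    rw [h3] at h2
    exact tendsto_nhds_unique h2 tendsto_const_nhds
  set f : ℕ → ℝ := fun j => fObj B (P j) with hfdef
  have hpsd0 : ∀ j ℓ, ((1 : Matrix ((s : Fin t) × Fin (κ ℓ s)) ((s : Fin t) × Fin (κ ℓ s)) ℂ)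
      - (P j ℓ)ᴴ * P j ℓ).PosSemidef := by
    intro j ℓ
    rw [horth j ℓ, sub_self]
    exact ⟨Matrix.isHermitian_zero, fun x => by simp⟩
  have hDn : ∀ j ℓ, 0 ≤ traceNorm (scrH B (P j) ℓ)
      - (Matrix.trace ((P j ℓ)ᴴ * scrH B (P j) ℓ)).re :=
    fun j ℓ => sub_nonneg.mpr (re_trace_le_traceNorm _ _ (hpsd0 j ℓ))
  have hstep : ∀ j, f j ≤ f (j + 1) := by
    intro j
    have h4 := hsa j
    have h5 : (0:ℝ) ≤ Finset.univ.sup' ⟨⟨0, hm⟩, Finset.mem_univ _⟩ fun ℓ : Fin m =>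
        traceNorm (scrH B (P j) ℓ) - (Matrix.trace ((P j ℓ)ᴴ * scrH B (P j) ℓ)).re :=
      le_trans (hDn j ⟨0, hm⟩) (Finset.le_sup' (fun ℓ' : Fin m =>
        traceNorm (scrH B (P j) ℓ') - (Matrix.trace ((P j ℓ')ᴴ * scrH B (P j) ℓ')).re)
        (Finset.mem_univ ⟨0, hm⟩))
    nlinarith [mul_nonneg hc.le h5]
  have hbdd : BddAbove (Set.range f) := by
    refine ⟨(Fintype.card (∀ ℓ, (s : Fin t) × Fin (κ ℓ s)) : ℝ)
      * (∑ j : (∀ ℓ, Fin (n ℓ)), ‖B j‖)^2, ?_⟩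
    rintro x ⟨j, rfl⟩
    exact fObj_le B (P j) (horth j)
  have hconv : Tendsto f atTop (𝓝 (⨆ j, f j)) :=
    tendsto_atTop_ciSup (monotone_nat_of_le_succ hstep) hbdd
  have hdiff : Tendsto (fun j => f (j + 1) - f j) atTop (𝓝 0) := by
    have h2 : Tendsto (fun j => f (j + 1)) atTop (𝓝 (⨆ j, f j)) :=
      hconv.comp (tendsto_add_atTop_nat 1)
    simpa using h2.sub hconv
  have hDle : ∀ j ℓ, traceNorm (scrH B (P j) ℓ)
      - (Matrix.trace ((P j ℓ)ᴴ * scrH B (P j) ℓ)).re ≤ (f (j + 1) - f j) / c := by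
    intro j ℓ
    have h4 := hsa j
    have h5 : traceNorm (scrH B (P j) ℓ) - (Matrix.trace ((P j ℓ)ᴴ * scrH B (P j) ℓ)).re
        ≤ Finset.univ.sup' ⟨⟨0, hm⟩, Finset.mem_univ _⟩ fun ℓ' : Fin m =>
          traceNorm (scrH B (P j) ℓ') - (Matrix.trace ((P j ℓ')ᴴ * scrH B (P j) ℓ')).re :=
      Finset.le_sup' (fun ℓ' : Fin m =>
        traceNorm (scrH B (P j) ℓ') - (Matrix.trace ((P j ℓ')ᴴ * scrH B (P j) ℓ')).re)
        (Finset.mem_univ ℓ)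
    rw [le_div_iff₀ hc]
    calc (traceNorm (scrH B (P j) ℓ) - (Matrix.trace ((P j ℓ)ᴴ * scrH B (P j) ℓ)).re) * c
        = c * (traceNorm (scrH B (P j) ℓ) - (Matrix.trace ((P j ℓ)ᴴ * scrH B (P j) ℓ)).re) :=
          mul_comm _ _
    _ ≤ c * Finset.univ.sup' ⟨⟨0, hm⟩, Finset.mem_univ _⟩ (fun ℓ' : Fin m =>
          traceNorm (scrH B (P j) ℓ') - (Matrix.trace ((P j ℓ')ᴴ * scrH B (P j) ℓ')).re) :=
          mul_le_mul_of_nonneg_left h5 hc.le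
    _ ≤ f (j + 1) - f j := h4
  have hDto : ∀ ℓ, Tendsto (fun j => traceNorm (scrH B (P j) ℓ)
      - (Matrix.trace ((P j ℓ)ᴴ * scrH B (P j) ℓ)).re) atTop (𝓝 0) :=
    fun ℓ => squeeze_zero (fun j => hDn j ℓ) (fun j => hDle j ℓ)
      (by simpa using hdiff.div_const c)
  intro ℓ
  have hTN : Tendsto (fun j => traceNorm (scrH B (P j) ℓ)) F
      (𝓝 ((Matrix.trace ((Pstar ℓ)ᴴ * scrH B Pstar ℓ)).re)) := by
    have h6 : (fun j => traceNorm (scrH B (P j) ℓ))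
        = fun j => (traceNorm (scrH B (P j) ℓ)
            - (Matrix.trace ((P j ℓ)ᴴ * scrH B (P j) ℓ)).re)
          + (Matrix.trace ((P j ℓ)ᴴ * scrH B (P j) ℓ)).re := by
      funext j; ring
    rw [h6]
    simpa using (((hDto ℓ).mono_left inf_le_left).add (htrP ℓ))
  obtain ⟨G, hG1, hG2⟩ := exists_dual (scrH B Pstar ℓ)
  have hGt : Tendsto (fun j => (Matrix.trace (Gᴴ * scrH B (P j) ℓ)).re) F
      (𝓝 ((Matrix.trace (Gᴴ * scrH B Pstar ℓ)).re)) := by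
    simp only [htrexp ℓ]
    refine tendsto_finset_sum _ fun sc _ => tendsto_finset_sum _ fun a _ => ?_
    exact (Complex.continuous_re.tendsto _).comp ((hscrH ℓ a sc).const_mul (star (G a sc)))
  have hle1 : ∀ j, (Matrix.trace (Gᴴ * scrH B (P j) ℓ)).re ≤ traceNorm (scrH B (P j) ℓ) :=
    fun j => re_trace_le_traceNorm G _ hG1
  have hfin : traceNorm (scrH B Pstar ℓ) ≤ (Matrix.trace ((Pstar ℓ)ᴴ * scrH B Pstar ℓ)).re := by
    rw [← hG2]
    exact le_of_tendsto_of_tendsto' hGt hTN hle1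
  exact kkt_of_eq (Pstar ℓ) (scrH B Pstar ℓ) (horthStar ℓ) hfin
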